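/- (Debord) If 𝒯 = (T, w) is a weighted weak tournament in which all weights have the same parity, and this parity is even if T is not a tournament, then 𝒯 is the margin graph of a profile: there exists a profile P with X(P) = X(𝒯) such that ℳ(P) = 𝒯. -/

import Mathlib

/- Formalization of voting-theoretic notions from Holliday, Norman, Pacuit, Zahedian,
"Impossibility theorems involving weakenings of expansion consistency and resoluteness
in voting". Candidates form an infinite type `C` and voters an infinite type `V`. -/

open Classical

noncomputable section

/-- `L` is a strict linear order on exactly the finite set `s`. -/
def IsStrictLinearOrderOn {C : Type} (s : Finset C) (L : C → C → Prop) : Prop :=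
  (∀ x, ¬ L x x) ∧ (∀ x y z, L x y → L y z → L x z) ∧
    (∀ x ∈ s, ∀ y ∈ s, x ≠ y → L x y ∨ L y x) ∧ ∀ x y, L x y → x ∈ s ∧ y ∈ s

/-- Restriction of a relation to a finite set `A`. -/
def restrictRel {C : Type} (A : Finset C) (L : C → C → Prop) : C → C → Prop :=
  fun x y => L x y ∧ x ∈ A ∧ y ∈ A

theorem IsStrictLinearOrderOn.restrict {C : Type} {s A : Finset C} {L : C → C → Prop}
    (h : IsStrictLinearOrderOn s L) (hA : A ⊆ s) :
    IsStrictLinearOrderOn A (restrictRel A L) := by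
  obtain ⟨hirr, htr, htot, hdom⟩ := h
  refine ⟨fun x hx => hirr x hx.1,
    fun x y z hxy hyz => ⟨htr _ _ _ hxy.1 hyz.1, hxy.2.1, hyz.2.2⟩, ?_,
    fun x y hxy => ⟨hxy.2.1, hxy.2.2⟩⟩
  intro x hx y hy hne
  rcases htot x (hA hx) y (hA hy) hne with h' | h'
  · exact Or.inl ⟨h', hx, hy⟩
  · exact Or.inr ⟨h', hy, hx⟩

/-- The image of a relation under the transposition of `a` and `b`. -/
def swapRel {C : Type} (a b : C) (L : C → C → Prop) : C → C → Prop :=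
  fun x y => L (Equiv.swap a b x) (Equiv.swap a b y)

theorem IsStrictLinearOrderOn.swapRel_mem {C : Type} {s : Finset C} {L : C → C → Prop}
    (a b : C) (h : IsStrictLinearOrderOn s L) :
    IsStrictLinearOrderOn (s.image (Equiv.swap a b)) (swapRel a b L) := by
  obtain ⟨hirr, htr, htot, hdom⟩ := h
  refine ⟨fun x => hirr _, fun x y z hxy hyz => htr _ _ _ hxy hyz, ?_, ?_⟩
  · intro x hx y hy hne
    obtain ⟨x', hx', rfl⟩ := Finset.mem_image.mp hx
    obtain ⟨y', hy', rfl⟩ := Finset.mem_image.mp hy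
    have hne' : x' ≠ y' := by rintro rfl; exact hne rfl
    have := htot x' hx' y' hy' hne'
    simpa [swapRel, Equiv.swap_apply_self] using this
  · intro x y hxy
    obtain ⟨h1, h2⟩ := hdom _ _ hxy
    exact ⟨Finset.mem_image.mpr ⟨_, h1, Equiv.swap_apply_self a b x⟩,
      Finset.mem_image.mpr ⟨_, h2, Equiv.swap_apply_self a b y⟩⟩

/-- A preference profile: each voter in the finite set `voters` submits a strict linear
order of the finite nonempty set `cands` of candidates. -/
structure Profile (C V : Type) where
  voters : Finset V
  cands : Finset C
  cands_nonempty : cands.Nonempty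
  ballot : V → C → C → Prop
  ballot_lin : ∀ i ∈ voters, IsStrictLinearOrderOn cands (ballot i)

namespace Profile

variable {C V : Type}

/-- The margin of `x` over `y` in `P`: the number of voters ranking `x` above `y`
minus the number of voters ranking `y` above `x`. -/
def margin (P : Profile C V) (x y : C) : ℤ :=
  ((P.voters.filter (fun i => P.ballot i x y)).card : ℤ) -
    ((P.voters.filter (fun i => P.ballot i y x)).card : ℤ)

/-- The profile `P^{i⇄j}` obtained by transposing the voters `i` and `j`. -/
def swapVoters (P : Profile C V) (i j : V) : Profile C V where
  voters := P.voters.image (Equiv.swap i j)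
  cands := P.cands
  cands_nonempty := P.cands_nonempty
  ballot := fun k => P.ballot (Equiv.swap i j k)
  ballot_lin := by
    intro k hk
    obtain ⟨m, hm, rfl⟩ := Finset.mem_image.mp hk
    simpa [Equiv.swap_apply_self] using P.ballot_lin m hm

/-- The profile `P_{a⇄b}` obtained by transposing the candidates `a` and `b`. -/
def swapCands (P : Profile C V) (a b : C) : Profile C V where
  voters := P.voters
  cands := P.cands.image (Equiv.swap a b)
  cands_nonempty := P.cands_nonempty.image _
  ballot := fun i => swapRel a b (P.ballot i)
  ballot_lin := fun i hi => (P.ballot_lin i hi).swapRel_mem a b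

/-- The restriction `P|_A` of a profile to a nonempty subset `A` of its candidates. -/
def restrict (P : Profile C V) (A : Finset C) (hA : A.Nonempty) (hsub : A ⊆ P.cands) :
    Profile C V where
  voters := P.voters
  cands := A
  cands_nonempty := hA
  ballot := fun i => restrictRel A (P.ballot i)
  ballot_lin := fun i hi => (P.ballot_lin i hi).restrict hsub

/-- The profile `P_{-y}`, i.e. `P` with the candidate `y` removed. -/
def minus (P : Profile C V) (y : C) (h : (P.cands.erase y).Nonempty) : Profile C V :=
  P.restrict (P.cands.erase y) h (P.cands.erase_subset y)

/-- The profile `P|_{{x,y}}`, i.e. `P` restricted to the two candidates `x` and `y`. -/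
def pair (P : Profile C V) (x y : C) (hx : x ∈ P.cands) (hy : y ∈ P.cands) : Profile C V :=
  P.restrict {x, y} ⟨x, Finset.mem_insert_self x {y}⟩
    (by
      intro z hz
      rcases Finset.mem_insert.mp hz with rfl | hz
      · exact hx
      · rcases Finset.mem_singleton.mp hz with rfl
        exact hy)

/-- `P` is uniquely weighted: no two distinct ordered pairs of distinct candidates
have the same margin. -/
def UniquelyWeighted (P : Profile C V) : Prop :=
  ∀ a ∈ P.cands, ∀ b ∈ P.cands, ∀ x ∈ P.cands, ∀ y ∈ P.cands,
    a ≠ b → x ≠ y → (a, b) ≠ (x, y) → P.margin a b ≠ P.margin x y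

/-- `P` is uniquely ranked: in every subelection with at least two candidates, no two
candidates have the same number of `n`-th place votes, and no two candidates have the
same Borda score. -/
def UniquelyRanked (P : Profile C V) : Prop :=
  ∀ Y ⊆ P.cands, 2 ≤ Y.card →
    ((∀ n : ℕ, 1 ≤ n → n ≤ Y.card → ∀ x ∈ Y, ∀ y ∈ Y, x ≠ y →
        (P.voters.filter
            (fun i => (Y.filter (fun z => P.ballot i z x)).card = n - 1)).card ≠
          (P.voters.filter
            (fun i => (Y.filter (fun z => P.ballot i z y)).card = n - 1)).card) ∧
      (∀ x ∈ Y, ∀ y ∈ Y, x ≠ y →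
        (∑ i ∈ P.voters, (Y.filter (fun z => P.ballot i x z)).card) ≠
          ∑ i ∈ P.voters, (Y.filter (fun z => P.ballot i y z)).card))

/-- `Q` is an `n`-fold copy `nP` of `P`: same candidates, and there is a map sending
the voters of `Q` onto the voters of `P` such that each voter of `P` has exactly `n`
preimages, each with the same ballot. -/
def IsCopy (Q P : Profile C V) (n : ℕ) : Prop :=
  Q.cands = P.cands ∧
    ∃ h : V → V,
      (∀ j ∈ Q.voters, h j ∈ P.voters) ∧
      (∀ i ∈ P.voters, (Q.voters.filter (fun j => h j = i)).card = n) ∧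
      (∀ j ∈ Q.voters, Q.ballot j = P.ballot (h j))

/-- `Q` is obtained from `P` by deleting one voter with each linear order of the
candidates of `P`. -/
def IsCancelOf (Q P : Profile C V) : Prop :=
  Q.cands = P.cands ∧ Q.voters ⊆ P.voters ∧
    (∀ j ∈ Q.voters, Q.ballot j = P.ballot j) ∧
    ∀ L : C → C → Prop, IsStrictLinearOrderOn P.cands L →
      ((P.voters \ Q.voters).filter (fun i => P.ballot i = L)).card = 1

end Profile

/-- A voting method: a function assigning to each profile in a nonempty domain a
nonempty set of winners among its candidates. -/
structure VotingMethod (C V : Type) where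
  dom : Set (Profile C V)
  dom_nonempty : dom.Nonempty
  winners : Profile C V → Finset C
  winners_nonempty : ∀ P ∈ dom, (winners P).Nonempty
  winners_sub : ∀ P ∈ dom, winners P ⊆ P.cands

namespace VotingMethod

variable {C V : Type}

/-- Anonymity: transposing two voters does not change the winners. -/
def Anonymous (F : VotingMethod C V) : Prop :=
  ∀ P ∈ F.dom, ∀ i j : V, P.swapVoters i j ∈ F.dom →
    F.winners (P.swapVoters i j) = F.winners P

/-- Neutrality: transposing two candidates transposes the winners accordingly. -/
def Neutral (F : VotingMethod C V) : Prop :=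
  ∀ P ∈ F.dom, ∀ a b : C, P.swapCands a b ∈ F.dom →
    F.winners (P.swapCands a b) = (F.winners P).image (Equiv.swap a b)

/-- Binary resoluteness: a unique winner in any two-candidate profile. -/
def BinaryResolute (F : VotingMethod C V) : Prop :=
  ∀ P ∈ F.dom, P.cands.card = 2 → (F.winners P).card = 1

/-- Binary quasi-resoluteness: a unique winner in any two-candidate profile whose
two distinct candidates have a nonzero margin between them. -/
def BinaryQuasiResolute (F : VotingMethod C V) : Prop :=
  ∀ P ∈ F.dom, P.cands.card = 2 →
    (∀ x ∈ P.cands, ∀ y ∈ P.cands, x ≠ y → P.margin x y ≠ 0) →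
    (F.winners P).card = 1

/-- Quasi-resoluteness: a unique winner in any uniquely weighted profile. -/
def QuasiResolute (F : VotingMethod C V) : Prop :=
  ∀ P ∈ F.dom, P.UniquelyWeighted → (F.winners P).card = 1

/-- Weak quasi-resoluteness: a unique winner in any profile that is both uniquely
weighted and uniquely ranked. -/
def WeakQuasiResolute (F : VotingMethod C V) : Prop :=
  ∀ P ∈ F.dom, P.UniquelyWeighted → P.UniquelyRanked → (F.winners P).card = 1

/-- Binary γ: if `x` wins without `y` and wins the head-to-head against `y`,
then `x` wins with `y` included. -/
def BinaryGamma (F : VotingMethod C V) : Prop :=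
  ∀ P ∈ F.dom, ∀ x, ∀ hx : x ∈ P.cands, ∀ y, ∀ hy : y ∈ P.cands, x ≠ y →
    ∀ h : (P.cands.erase y).Nonempty,
      P.minus y h ∈ F.dom → P.pair x y hx hy ∈ F.dom →
      x ∈ F.winners (P.minus y h) → F.winners (P.pair x y hx hy) = {x} →
      x ∈ F.winners P

/-- α-resoluteness: if `x` wins without `y` and wins the head-to-head against `y`,
then adding `y` does not enlarge the set of winners. -/
def AlphaResolute (F : VotingMethod C V) : Prop :=
  ∀ P ∈ F.dom, ∀ x, ∀ hx : x ∈ P.cands, ∀ y, ∀ hy : y ∈ P.cands, x ≠ y →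
    ∀ h : (P.cands.erase y).Nonempty,
      P.minus y h ∈ F.dom → P.pair x y hx hy ∈ F.dom →
      x ∈ F.winners (P.minus y h) → F.winners (P.pair x y hx hy) = {x} →
      (F.winners P).card ≤ (F.winners (P.minus y h)).card

/-- Homogeneity: replacing each voter by `n` copies of that voter does not change
the winners. -/
def Homogeneous (F : VotingMethod C V) : Prop :=
  ∀ P ∈ F.dom, ∀ Q ∈ F.dom, ∀ n : ℕ, 0 < n → Q.IsCopy P n → F.winners Q = F.winners P

/-- Cancellativity: deleting one voter with each linear order of the candidates does
not change the winners. -/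
def Cancellative (F : VotingMethod C V) : Prop :=
  ∀ P ∈ F.dom, ∀ Q ∈ F.dom, Q.IsCancelOf P → F.winners Q = F.winners P

/-- Majoritarianism: the winners depend only on the majority graph of the profile. -/
def Majoritarian (F : VotingMethod C V) : Prop :=
  ∀ P ∈ F.dom, ∀ P' ∈ F.dom, P.cands = P'.cands →
    (∀ x ∈ P.cands, ∀ y ∈ P.cands, (0 < P.margin x y ↔ 0 < P'.margin x y)) →
    F.winners P = F.winners P'

/-- Pairwiseness: the winners depend only on the margin graph of the profile. -/
def Pairwise (F : VotingMethod C V) : Prop :=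
  ∀ P ∈ F.dom, ∀ P' ∈ F.dom, P.cands = P'.cands →
    (∀ x ∈ P.cands, ∀ y ∈ P.cands, P.margin x y = P'.margin x y) →
    F.winners P = F.winners P'

end VotingMethod

/-- A weighted weak tournament: an asymmetric directed graph on a finite nonempty set
of vertices, with a positive integer weight on each edge. -/
structure WeightedWeakTournament (C : Type) where
  verts : Finset C
  verts_nonempty : verts.Nonempty
  edge : C → C → Prop
  edge_asymm : ∀ x y, edge x y → ¬ edge y x
  edge_dom : ∀ x y, edge x y → x ∈ verts ∧ y ∈ verts
  wt : C → C → ℤ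
  wt_pos : ∀ x y, edge x y → 0 < wt x y

/-- `T` is a tournament: any two distinct vertices are related by an edge. -/
def WeightedWeakTournament.IsTournament {C : Type} (T : WeightedWeakTournament C) : Prop :=
  ∀ a ∈ T.verts, ∀ b ∈ T.verts, a ≠ b → T.edge a b ∨ T.edge b a



section DebordAux

variable {C V : Type}

private def relOfRank (s : Finset C) (r : C → ℕ) : C → C → Prop :=
  fun a b => a ∈ s ∧ b ∈ s ∧ r a < r b

private theorem relOfRank_lin {s : Finset C} {r : C → ℕ}
    (hr : ∀ a ∈ s, ∀ b ∈ s, r a = r b → a = b) :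
    IsStrictLinearOrderOn s (relOfRank s r) := by
  refine ⟨fun x hx => lt_irrefl _ hx.2.2,
    fun x y z hxy hyz => ⟨hxy.1, hyz.2.1, hxy.2.2.trans hyz.2.2⟩, ?_,
    fun x y h => ⟨h.1, h.2.1⟩⟩
  intro x hx y hy hne
  rcases lt_trichotomy (r x) (r y) with h | h | h
  · exact Or.inl ⟨hx, hy, h⟩
  · exact absurd (hr x hx y hy h) hne
  · exact Or.inr ⟨hy, hx, h⟩

/-- The margin contribution of a single voter with ballot `L`. -/
private def sgl (L : C → C → Prop) (a b : C) : ℤ :=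
  (if L a b then 1 else 0) - (if L b a then 1 else 0)

private theorem sgl_pos {s : Finset C} {r : C → ℕ} {a b : C} (ha : a ∈ s) (hb : b ∈ s)
    (h : r a < r b) : sgl (relOfRank s r) a b = 1 := by
  have h' : ¬ r b < r a := Nat.lt_asymm h
  simp [sgl, relOfRank, ha, hb, h, h']

private theorem sgl_neg {s : Finset C} {r : C → ℕ} {a b : C} (ha : a ∈ s) (hb : b ∈ s)
    (h : r b < r a) : sgl (relOfRank s r) a b = -1 := by
  have h' : ¬ r a < r b := Nat.lt_asymm h
  simp [sgl, relOfRank, ha, hb, h, h']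

private theorem exists_rank (s : Finset C) :
    ∃ rk : C → ℕ, (∀ a ∈ s, rk a < s.card) ∧ (∀ a ∈ s, ∀ b ∈ s, rk a = rk b → a = b) := by
  classical
  have e : (s : Type _) ≃ Fin s.card := Fintype.equivFinOfCardEq (Fintype.card_coe s)
  refine ⟨fun c => if h : c ∈ s then (e ⟨c, h⟩ : ℕ) else 0, ?_, ?_⟩
  · intro a ha
    dsimp only
    rw [dif_pos ha]
    exact (e ⟨a, ha⟩).2
  · intro a ha b hb h
    dsimp only at h
    rw [dif_pos ha, dif_pos hb] at h
    have := e.injective (Fin.ext h)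
    exact congrArg Subtype.val this

/-- Add a fresh voter with ballot `L` to a profile. -/
private def addVoter (P : Profile C V) (v : V) (L : C → C → Prop)
    (hL : IsStrictLinearOrderOn P.cands L) : Profile C V where
  voters := insert v P.voters
  cands := P.cands
  cands_nonempty := P.cands_nonempty
  ballot := fun i => if i = v then L else P.ballot i
  ballot_lin := by
    intro i hi
    rcases Finset.mem_insert.mp hi with rfl | hi
    · simpa using hL
    · by_cases h : i = v
      · subst h; simpa using hL
      · simpa [h] using P.ballot_lin i hi

private theorem addVoter_margin (P : Profile C V) {v : V} (L : C → C → Prop)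
    (hL : IsStrictLinearOrderOn P.cands L) (hv : v ∉ P.voters) (x y : C) :
    (addVoter P v L hL).margin x y = P.margin x y + sgl L x y := by
  have key : ∀ a b : C,
      (((insert v P.voters).filter
          (fun i => (if i = v then L else P.ballot i) a b)).card : ℤ)
        = ((P.voters.filter (fun i => P.ballot i a b)).card : ℤ)
            + (if L a b then 1 else 0) := by
    intro a b
    rw [Finset.filter_insert]
    have hc : P.voters.filter (fun i => (if i = v then L else P.ballot i) a b)
        = P.voters.filter (fun i => P.ballot i a b) := by
      apply Finset.filter_congr
      intro i hi
      have hiv : i ≠ v := fun h => hv (h ▸ hi)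
      simp [hiv]
    by_cases h : L a b
    · rw [if_pos (by simpa using h), Finset.card_insert_of_notMem
        (fun hmem => hv (Finset.mem_of_mem_filter _ hmem)), hc, if_pos h]
      push_cast; ring
    · rw [if_neg (by simpa using h), hc, if_neg h]
      push_cast; ring
  simp only [Profile.margin, addVoter]
  erw [key x y, key y x]
  simp only [sgl]
  ring

/-- The empty profile on candidate set `s`. -/
private def emptyProfile (s : Finset C) (hs : s.Nonempty) : Profile C V where
  voters := ∅
  cands := s
  cands_nonempty := hs
  ballot := fun _ _ _ => False
  ballot_lin := fun i hi => absurd hi (Finset.notMem_empty i)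

private theorem emptyProfile_margin (s : Finset C) (hs : s.Nonempty) (a b : C) :
    (emptyProfile (V := V) s hs).margin a b = 0 := by
  simp [Profile.margin, emptyProfile]
  rfl

/-- McGarvey gadget: two linear orders on `s` whose combined margin contribution is
`+2` for `(x, y)`, `-2` for `(y, x)`, and `0` for every other pair. -/
private theorem mcgarvey (s : Finset C) {x y : C} (hx : x ∈ s) (hy : y ∈ s)
    (hne : x ≠ y) :
    ∃ L1 L2 : C → C → Prop, IsStrictLinearOrderOn s L1 ∧ IsStrictLinearOrderOn s L2 ∧
      ∀ a b, sgl L1 a b + sgl L2 a b =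
        (if a = x ∧ b = y then (2 : ℤ) else 0) - (if b = x ∧ a = y then 2 else 0) := by
  classical
  obtain ⟨rk, hlt, hinj⟩ := exists_rank s
  set n := s.card with hn
  set r1 : C → ℕ := fun c => if c = x then 0 else if c = y then 1 else rk c + 2 with hr1
  set r2 : C → ℕ := fun c => if c = x then n else if c = y then n + 1 else n - 1 - rk c
    with hr2
  have hr1x : r1 x = 0 := by simp [hr1]
  have hr1y : r1 y = 1 := by simp [hr1, hne.symm]
  have hr1o : ∀ c, c ≠ x → c ≠ y → r1 c = rk c + 2 := by
    intro c h1 h2; simp [hr1, h1, h2]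
  have hr2x : r2 x = n := by simp [hr2]
  have hr2y : r2 y = n + 1 := by simp [hr2, hne.symm]
  have hr2o : ∀ c, c ≠ x → c ≠ y → r2 c = n - 1 - rk c := by
    intro c h1 h2; simp [hr2, h1, h2]
  have hinj1 : ∀ a ∈ s, ∀ b ∈ s, r1 a = r1 b → a = b := by
    intro a ha b hb h
    by_cases hax : a = x
    · by_cases hbx : b = x
      · exact hax.trans hbx.symm
      by_cases hby : b = y
      · rw [hax, hby, hr1x, hr1y] at h; omega
      · rw [hax, hr1x, hr1o b hbx hby] at h; omega
    by_cases hay : a = y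
    · by_cases hbx : b = x
      · rw [hay, hbx, hr1y, hr1x] at h; omega
      by_cases hby : b = y
      · exact hay.trans hby.symm
      · rw [hay, hr1y, hr1o b hbx hby] at h; omega
    · by_cases hbx : b = x
      · rw [hbx, hr1x, hr1o a hax hay] at h; omega
      by_cases hby : b = y
      · rw [hby, hr1y, hr1o a hax hay] at h; omega
      · rw [hr1o a hax hay, hr1o b hbx hby] at h
        exact hinj a ha b hb (by omega)
  have hinj2 : ∀ a ∈ s, ∀ b ∈ s, r2 a = r2 b → a = b := by
    intro a ha b hb h
    by_cases hax : a = x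
    · by_cases hbx : b = x
      · exact hax.trans hbx.symm
      by_cases hby : b = y
      · rw [hax, hby, hr2x, hr2y] at h; omega
      · rw [hax, hr2x, hr2o b hbx hby] at h; have := hlt b hb; omega
    by_cases hay : a = y
    · by_cases hbx : b = x
      · rw [hay, hbx, hr2y, hr2x] at h; omega
      by_cases hby : b = y
      · exact hay.trans hby.symm
      · rw [hay, hr2y, hr2o b hbx hby] at h; have := hlt b hb; omega
    · by_cases hbx : b = x
      · rw [hbx, hr2x, hr2o a hax hay] at h; have := hlt a ha; omega
      by_cases hby : b = y
      · rw [hby, hr2y, hr2o a hax hay] at h; have := hlt a ha; omega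
      · rw [hr2o a hax hay, hr2o b hbx hby] at h
        have h1 := hlt a ha; have h2 := hlt b hb
        exact hinj a ha b hb (by omega)
  refine ⟨relOfRank s r1, relOfRank s r2, relOfRank_lin hinj1, relOfRank_lin hinj2, ?_⟩
  intro a b
  by_cases ha : a ∈ s
  case neg =>
    have hax : a ≠ x := fun h => ha (h ▸ hx)
    have hay : a ≠ y := fun h => ha (h ▸ hy)
    simp [sgl, relOfRank, ha, hax, hay]
  by_cases hb : b ∈ s
  case neg =>
    have hbx : b ≠ x := fun h => hb (h ▸ hx)
    have hby : b ≠ y := fun h => hb (h ▸ hy)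
    simp [sgl, relOfRank, hb, hbx, hby]
  by_cases hab : a = b
  · have hno : ¬ (a = x ∧ b = y) := fun h => hne (by rw [← h.1, hab, h.2])
    have hno2 : ¬ (b = x ∧ a = y) := fun h => hne (by rw [← h.1, ← hab, h.2])
    rw [if_neg hno, if_neg hno2]
    have e1 : sgl (relOfRank s r1) a b = 0 := by
      rw [hab]; simp only [sgl]; ring
    have e2 : sgl (relOfRank s r2) a b = 0 := by
      rw [hab]; simp only [sgl]; ring
    rw [e1, e2]; norm_num
  by_cases hax : a = x
  · have hbx : b ≠ x := fun h => hab (hax.trans h.symm)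
    by_cases hby : b = y
    · rw [sgl_pos ha hb (by rw [hax, hby, hr1x, hr1y]; omega),
          sgl_pos ha hb (by rw [hax, hby, hr2x, hr2y]; omega),
          if_pos ⟨hax, hby⟩, if_neg (fun h => hne (hax.symm.trans h.2))]
      norm_num
    · rw [sgl_pos ha hb (by rw [hax, hr1x, hr1o b hbx hby]; omega),
          sgl_neg ha hb (by rw [hax, hr2x, hr2o b hbx hby]; have := hlt b hb; omega),
          if_neg (fun h => hby h.2), if_neg (fun h => hbx h.1)]
      norm_num
  by_cases hay : a = y
  · have hby : b ≠ y := fun h => hab (hay.trans h.symm)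
    by_cases hbx : b = x
    · rw [sgl_neg ha hb (by rw [hay, hbx, hr1x, hr1y]; omega),
          sgl_neg ha hb (by rw [hay, hbx, hr2x, hr2y]; omega),
          if_neg (fun h => hne (hay.symm.trans h.1).symm), if_pos ⟨hbx, hay⟩]
      norm_num
    · rw [sgl_pos ha hb (by rw [hay, hr1y, hr1o b hbx hby]; omega),
          sgl_neg ha hb (by rw [hay, hr2y, hr2o b hbx hby]; have := hlt b hb; omega),
          if_neg (fun h => hby h.2), if_neg (fun h => hbx h.1)]
      norm_num
  · by_cases hbx : b = x
    · rw [sgl_neg ha hb (by rw [hbx, hr1x, hr1o a hax hay]; omega),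
          sgl_pos ha hb (by rw [hbx, hr2x, hr2o a hax hay]; have := hlt a ha; omega),
          if_neg (fun h => hax h.1), if_neg (fun h => hay h.2)]
      norm_num
    by_cases hby : b = y
    · rw [sgl_neg ha hb (by rw [hby, hr1y, hr1o a hax hay]; omega),
          sgl_pos ha hb (by rw [hby, hr2y, hr2o a hax hay]; have := hlt a ha; omega),
          if_neg (fun h => hax h.1), if_neg (fun h => hay h.2)]
      norm_num
    · have hrr : rk a ≠ rk b := fun h => hab (hinj a ha b hb h)
      have ha' := hlt a ha
      have hb' := hlt b hb
      rw [if_neg (fun h => hax h.1), if_neg (fun h => hbx h.1)]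
      rcases lt_or_gt_of_ne hrr with h | h
      · rw [sgl_pos ha hb (by rw [hr1o a hax hay, hr1o b hbx hby]; omega),
            sgl_neg ha hb (by rw [hr2o a hax hay, hr2o b hbx hby]; omega)]
        norm_num
      · rw [sgl_neg ha hb (by rw [hr1o a hax hay, hr1o b hbx hby]; omega),
            sgl_pos ha hb (by rw [hr2o a hax hay, hr2o b hbx hby]; omega)]
        norm_num

/-- Realization of any even antisymmetric margin function supported on `s`. -/
private theorem realize_even [Infinite V] (s : Finset C) (hs : s.Nonempty) :
    ∀ N : ℕ, ∀ m : C → C → ℤ,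
      (∀ a b, m a b = - m b a) →
      (∀ a b, m a b ≠ 0 → a ∈ s ∧ b ∈ s) →
      (∀ a b, m a b % 2 = 0) →
      (∑ p ∈ s ×ˢ s, (m p.1 p.2).natAbs) = N →
      ∃ P : Profile C V, P.cands = s ∧ ∀ a b, P.margin a b = m a b := by
  intro N
  induction N using Nat.strong_induction_on with
  | _ N ih =>
    intro m hanti hsupp heven hsum
    by_cases h0 : ∀ a b, m a b = 0
    · exact ⟨emptyProfile s hs, rfl, fun a b => by rw [emptyProfile_margin, h0]⟩
    · push_neg at h0
      have hex : ∃ x y, 0 < m x y := by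
        obtain ⟨x, y, hxy⟩ := h0
        rcases lt_or_gt_of_ne hxy with h | h
        · exact ⟨y, x, by rw [hanti y x]; omega⟩
        · exact ⟨x, y, h⟩
      obtain ⟨x, y, hpos⟩ := hex
      obtain ⟨hx, hy⟩ := hsupp x y (by omega)
      have hdiag : ∀ a, m a a = 0 := fun a => by have := hanti a a; omega
      have hne : x ≠ y := fun h => by rw [h, hdiag] at hpos; omega
      have h2 : 2 ≤ m x y := by have := heven x y; omega
      set m' : C → C → ℤ := fun a b =>
        m a b - ((if a = x ∧ b = y then (2 : ℤ) else 0) -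
          (if b = x ∧ a = y then 2 else 0)) with hm'
      have hm'def : ∀ a b, m' a b = m a b - ((if a = x ∧ b = y then (2 : ℤ) else 0) -
          (if b = x ∧ a = y then 2 else 0)) := fun a b => by rw [hm']
      have hm'xy : m' x y = m x y - 2 := by
        rw [hm'def, if_pos ⟨rfl, rfl⟩, if_neg (fun h => hne h.2)]; ring
      have hm'yx : m' y x = m y x + 2 := by
        rw [hm'def, if_neg (fun h => hne h.2), if_pos ⟨rfl, rfl⟩]; ring
      have hm'other : ∀ a b, ¬(a = x ∧ b = y) → ¬(b = x ∧ a = y) → m' a b = m a b := by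
        intro a b hc1 hc2; rw [hm'def, if_neg hc1, if_neg hc2]; ring
      have hanti' : ∀ a b, m' a b = - m' b a := by
        intro a b
        rw [hm'def a b, hm'def b a, hanti a b]
        ring
      have hsupp' : ∀ a b, m' a b ≠ 0 → a ∈ s ∧ b ∈ s := by
        intro a b hab
        by_cases hc1 : a = x ∧ b = y
        · exact ⟨hc1.1 ▸ hx, hc1.2 ▸ hy⟩
        by_cases hc2 : b = x ∧ a = y
        · exact ⟨hc2.2 ▸ hy, hc2.1 ▸ hx⟩
        · exact hsupp a b (by rwa [hm'other a b hc1 hc2] at hab)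
      have heven' : ∀ a b, m' a b % 2 = 0 := by
        intro a b
        rw [hm'def]
        have := heven a b
        split_ifs <;> omega
      have hle : ∀ p ∈ s ×ˢ s, (m' p.1 p.2).natAbs ≤ (m p.1 p.2).natAbs := by
        rintro ⟨a, b⟩ -
        dsimp only
        by_cases hc1 : a = x ∧ b = y
        · obtain ⟨rfl, rfl⟩ := hc1
          rw [hm'xy]; omega
        by_cases hc2 : b = x ∧ a = y
        · obtain ⟨rfl, rfl⟩ := hc2
          rw [hm'yx]
          have := hanti b a
          omega
        · rw [hm'other a b hc1 hc2]
      have hlt : ∑ p ∈ s ×ˢ s, (m' p.1 p.2).natAbs < N := by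
        rw [← hsum]
        apply Finset.sum_lt_sum hle
        refine ⟨(x, y), Finset.mem_product.mpr ⟨hx, hy⟩, ?_⟩
        dsimp only
        rw [hm'xy]
        omega
      obtain ⟨P', hc', hm'real⟩ := ih _ hlt m' hanti' hsupp' heven' rfl
      obtain ⟨L1, L2, hL1, hL2, hsgl⟩ := mcgarvey s hx hy hne
      obtain ⟨v1, hv1⟩ := Infinite.exists_notMem_finset P'.voters
      have hL1' : IsStrictLinearOrderOn P'.cands L1 := hc' ▸ hL1
      have hc1 : (addVoter P' v1 L1 hL1').cands = s := hc'
      obtain ⟨v2, hv2⟩ := Infinite.exists_notMem_finset (addVoter P' v1 L1 hL1').voters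
      have hL2' : IsStrictLinearOrderOn (addVoter P' v1 L1 hL1').cands L2 := hc1 ▸ hL2
      refine ⟨addVoter (addVoter P' v1 L1 hL1') v2 L2 hL2', hc1, fun a b => ?_⟩
      rw [addVoter_margin _ L2 hL2' hv2, addVoter_margin P' L1 hL1' hv1,
        hm'real a b, hm'def a b]
      have := hsgl a b
      linarith

end DebordAux

/-- **Debord.** If all weights of a weighted weak tournament have the
same parity, which is even if the underlying graph is not a tournament, then it is
the margin graph of a profile. -/
theorem debord (C V : Type) [Infinite C] [Infinite V] (T : WeightedWeakTournament C)
    (hpar : ∀ x y u v, T.edge x y → T.edge u v → T.wt x y % 2 = T.wt u v % 2)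
    (heven : ¬ T.IsTournament → ∀ x y, T.edge x y → T.wt x y % 2 = 0) :
    ∃ P : Profile C V, P.cands = T.verts ∧
      ∀ x ∈ T.verts, ∀ y ∈ T.verts,
        (0 < P.margin x y ↔ T.edge x y) ∧ (T.edge x y → P.margin x y = T.wt x y) := by
  classical
  set s := T.verts with hsdef
  set m : C → C → ℤ := fun a b =>
    if T.edge a b then T.wt a b else if T.edge b a then - T.wt b a else 0 with hmdef
  have hmval : ∀ a b, m a b =
      if T.edge a b then T.wt a b else if T.edge b a then - T.wt b a else 0 :=
    fun a b => by rw [hmdef]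
  have hanti : ∀ a b, m a b = - m b a := by
    intro a b
    rw [hmval a b, hmval b a]
    by_cases h1 : T.edge a b
    · have h2 : ¬ T.edge b a := T.edge_asymm _ _ h1
      simp [h1, h2]
    · by_cases h2 : T.edge b a
      · simp [h1, h2]
      · simp [h1, h2]
  have hsupp : ∀ a b, m a b ≠ 0 → a ∈ s ∧ b ∈ s := by
    intro a b hab
    rw [hmval a b] at hab
    by_cases h1 : T.edge a b
    · exact T.edge_dom a b h1
    by_cases h2 : T.edge b a
    · exact ⟨(T.edge_dom b a h2).2, (T.edge_dom b a h2).1⟩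
    · simp [h1, h2] at hab
  have hP : ∃ P : Profile C V, P.cands = s ∧ ∀ a b, P.margin a b = m a b := by
    by_cases hodd : ∃ a b, T.edge a b ∧ T.wt a b % 2 = 1
    · obtain ⟨a0, b0, he0, ho0⟩ := hodd
      have htour : T.IsTournament := by
        by_contra hnt
        have := heven hnt a0 b0 he0
        omega
      have hallodd : ∀ a b, T.edge a b → T.wt a b % 2 = 1 := fun a b h =>
        (hpar a b a0 b0 h he0).trans ho0
      obtain ⟨rk, hlt, hinj⟩ := exists_rank s
      have hL0 : IsStrictLinearOrderOn s (relOfRank s rk) := relOfRank_lin hinj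
      set L0 := relOfRank s rk with hL0def
      set m2 : C → C → ℤ := fun a b => m a b - sgl L0 a b with hm2
      have hm2def : ∀ a b, m2 a b = m a b - sgl L0 a b := fun a b => by rw [hm2]
      have hsgl0 : ∀ a b, a ∈ s → b ∈ s → a ≠ b →
          sgl L0 a b = 1 ∨ sgl L0 a b = -1 := by
        intro a b ha hb hab
        have hrr : rk a ≠ rk b := fun h => hab (hinj a ha b hb h)
        rcases lt_or_gt_of_ne hrr with h | h
        · exact Or.inl (sgl_pos ha hb h)
        · exact Or.inr (sgl_neg ha hb h)
      have hsglz : ∀ a b, (a ∉ s ∨ b ∉ s ∨ a = b) → sgl L0 a b = 0 := by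
        intro a b h
        rcases h with h | h | h
        · simp [sgl, hL0def, relOfRank, h]
        · simp [sgl, hL0def, relOfRank, h]
        · subst h; simp only [sgl]; ring
      have hanti2 : ∀ a b, m2 a b = - m2 b a := by
        intro a b
        rw [hm2def a b, hm2def b a, hanti a b]
        have hss : sgl L0 a b = - sgl L0 b a := by simp only [sgl]; ring
        rw [hss]; ring
      have hsupp2 : ∀ a b, m2 a b ≠ 0 → a ∈ s ∧ b ∈ s := by
        intro a b hab
        by_cases ha : a ∈ s
        · by_cases hb : b ∈ s
          · exact ⟨ha, hb⟩
          · exfalso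
            have h1 : m a b = 0 := by
              by_contra h; exact hb (hsupp a b h).2
            rw [hm2def, h1, hsglz a b (Or.inr (Or.inl hb))] at hab
            simp at hab
        · exfalso
          have h1 : m a b = 0 := by
            by_contra h; exact ha (hsupp a b h).1
          rw [hm2def, h1, hsglz a b (Or.inl ha)] at hab
          simp at hab
      have heven2 : ∀ a b, m2 a b % 2 = 0 := by
        intro a b
        rw [hm2def]
        by_cases ha : a ∈ s
        · by_cases hb : b ∈ s
          · by_cases hab : a = b
            · subst hab
              have h1 : m a a = 0 := by have := hanti a a; omega
              have h2 := hsglz a a (Or.inr (Or.inr rfl))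
              omega
            · have hModd : m a b % 2 = 1 := by
                rcases htour a ha b hb hab with h | h
                · rw [hmval, if_pos h]; exact hallodd a b h
                · rw [hmval, if_neg (T.edge_asymm _ _ h), if_pos h]
                  have := hallodd b a h
                  omega
              rcases hsgl0 a b ha hb hab with h | h <;> omega
          · have h1 : m a b = 0 := by
              by_contra h; exact hb (hsupp a b h).2
            have h2 := hsglz a b (Or.inr (Or.inl hb))
            omega
        · have h1 : m a b = 0 := by
            by_contra h; exact ha (hsupp a b h).1
          have h2 := hsglz a b (Or.inl ha)
          omega
      obtain ⟨P', hc', hreal⟩ :=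
        realize_even (V := V) s T.verts_nonempty _ m2 hanti2 hsupp2 heven2 rfl
      obtain ⟨v, hv⟩ := Infinite.exists_notMem_finset P'.voters
      have hL0' : IsStrictLinearOrderOn P'.cands L0 := hc' ▸ hL0
      refine ⟨addVoter P' v L0 hL0', hc', fun a b => ?_⟩
      rw [addVoter_margin P' L0 hL0' hv, hreal a b, hm2def]
      ring
    · push_neg at hodd
      have hevenall : ∀ a b, m a b % 2 = 0 := by
        intro a b
        rw [hmval]
        by_cases h1 : T.edge a b
        · rw [if_pos h1]
          have h2 := hodd a b h1
          have h3 := T.wt_pos a b h1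
          omega
        by_cases h2 : T.edge b a
        · rw [if_neg h1, if_pos h2]
          have h3 := hodd b a h2
          have h4 := T.wt_pos b a h2
          omega
        · rw [if_neg h1, if_neg h2]; norm_num
      exact realize_even (V := V) s T.verts_nonempty _ m hanti hsupp hevenall rfl
  obtain ⟨P, hc, hm⟩ := hP
  refine ⟨P, hc, fun a ha b hb => ⟨?_, ?_⟩⟩
  · rw [hm a b, hmval a b]
    constructor
    · intro h
      by_contra h1
      rw [if_neg h1] at h
      by_cases hh2 : T.edge b a
      · rw [if_pos hh2] at h
        have := T.wt_pos b a hh2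
        omega
      · rw [if_neg hh2] at h; omega
    · intro h
      rw [if_pos h]
      exact T.wt_pos a b h
  · intro h
    rw [hm a b, hmval a b, if_pos h]
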